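/- arXiv:math/0209011 — 2 statements merged into one kernel-verified Lean document; each statement's English description precedes it below -/
import Mathlib

section
/- Let R be a commutative Noetherian ring and 0 → F → G → B → 0 a short exact sequence of R-modules with F and G finite free. Let M = coker(G^* → F^*). Then there is an exact sequence 0 → Hom_R(B, F) → Hom_R(B, G) → Hom_R(B, B) → Hom_R(M, M) → 0. -/
open LinearMap

section Aux

variable {R : Type} [CommRing R]
variable {F G : Type} [AddCommGroup F] [Module R F] [AddCommGroup G] [Module R G]
variable (φ : F →ₗ[R] G) (hφ : Function.Injective φ)

private lemma exists_dualMap_eq' {X Y : Type} [AddCommGroup X] [Module R X]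
    [AddCommGroup Y] [Module R Y] [Module.IsReflexive R X]
    (K : Module.Dual R X →ₗ[R] Module.Dual R Y) : ∃ k : Y →ₗ[R] X, k.dualMap = K := by
  refine ⟨(Module.evalEquiv R X).symm.toLinearMap ∘ₗ K.dualMap ∘ₗ Module.Dual.eval R Y, ?_⟩
  ext α y
  simp

private lemma phi_symm (z : LinearMap.range φ) :
    φ ((LinearEquiv.ofInjective φ hφ).symm z) = (z : G) := by
  rw [← LinearEquiv.ofInjective_apply φ (h := hφ), LinearEquiv.apply_symm_apply]

private noncomputable def theta (n : (LinearMap.range φ).compatibleMaps (LinearMap.range φ)) :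
    F →ₗ[R] F :=
  (LinearEquiv.ofInjective φ hφ).symm.toLinearMap ∘ₗ
    LinearMap.codRestrict (LinearMap.range φ) ((n : G →ₗ[R] G) ∘ₗ φ)
      (fun x => Submodule.mem_comap.mp (n.2 (LinearMap.mem_range_self φ x)))

private lemma phi_theta (n : (LinearMap.range φ).compatibleMaps (LinearMap.range φ)) (x : F) :
    φ (theta φ hφ n x) = (n : G →ₗ[R] G) (φ x) := by
  simp only [theta, comp_apply, LinearEquiv.coe_coe, phi_symm φ hφ, codRestrict_apply]

private noncomputable def thetaL :
    ((LinearMap.range φ).compatibleMaps (LinearMap.range φ)) →ₗ[R] (F →ₗ[R] F) where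
  toFun := theta φ hφ
  map_add' a b := by
    ext x
    apply hφ
    simp [phi_theta, map_add]
  map_smul' c a := by
    ext x
    apply hφ
    simp [phi_theta, map_smul]

private lemma dual_mem (n : (LinearMap.range φ).compatibleMaps (LinearMap.range φ)) :
    (theta φ hφ n).dualMap ∈
      (LinearMap.range φ.dualMap).compatibleMaps (LinearMap.range φ.dualMap) := by
  rintro α ⟨β, rfl⟩
  refine Submodule.mem_comap.mpr ⟨(n : G →ₗ[R] G).dualMap β, ?_⟩
  ext x
  simp [phi_theta]

private noncomputable def PsiL :
    ((LinearMap.range φ).compatibleMaps (LinearMap.range φ)) →ₗ[R]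
      ((Module.Dual R F ⧸ LinearMap.range φ.dualMap) →ₗ[R]
        (Module.Dual R F ⧸ LinearMap.range φ.dualMap)) :=
  (Submodule.mapQLinear _ _) ∘ₗ
    (LinearMap.codRestrict _ (Module.Dual.transpose ∘ₗ thetaL φ hφ)
      (fun n => dual_mem φ hφ n))

private lemma PsiL_apply (n : (LinearMap.range φ).compatibleMaps (LinearMap.range φ))
    (α : Module.Dual R F) :
    PsiL φ hφ n ((LinearMap.range φ.dualMap).mkQ α) =
      (LinearMap.range φ.dualMap).mkQ ((theta φ hφ n).dualMap α) := by
  simp only [PsiL, comp_apply, Submodule.mapQLinear, coe_mk, AddHom.coe_mk,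
    Submodule.mkQ_apply, Submodule.mapQ_apply]
  rfl

private noncomputable def piL :
    ((LinearMap.range φ).compatibleMaps (LinearMap.range φ)) →ₗ[R]
      ((G ⧸ LinearMap.range φ) →ₗ[R] (G ⧸ LinearMap.range φ)) :=
  Submodule.mapQLinear _ _

private lemma piL_apply (n : (LinearMap.range φ).compatibleMaps (LinearMap.range φ)) (x : G) :
    piL φ n ((LinearMap.range φ).mkQ x) = (LinearMap.range φ).mkQ ((n : G →ₗ[R] G) x) := by
  simp only [piL, Submodule.mapQLinear, coe_mk, AddHom.coe_mk, Submodule.mkQ_apply,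
    Submodule.mapQ_apply]
  rfl

end Aux


set_option maxHeartbeats 2000000 in
/-- Let `R` be a commutative Noetherian ring and
`0 → F → G → B → 0` a short exact sequence of `R`-modules with `F`, `G` finite free
(`B = G ⧸ range φ`).  Let `M = coker (φ* : G* → F*)`.  Then there is an exact sequence
`0 → Hom_R(B, F) → Hom_R(B, G) → Hom_R(B, B) → Hom_R(M, M) → 0`, where the first two maps
are postcomposition with `φ` and with the projection `G → B`, and the last map is the one
induced by dualization. -/
theorem stmt1 (R : Type) [CommRing R] [IsNoetherianRing R]
    (F G : Type) [AddCommGroup F] [Module R F] [Module.Finite R F] [Module.Free R F]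
    [AddCommGroup G] [Module R G] [Module.Finite R G] [Module.Free R G]
    (φ : F →ₗ[R] G) (hφ : Function.Injective φ) :
    ∃ (g : ((G ⧸ LinearMap.range φ) →ₗ[R] (G ⧸ LinearMap.range φ)) →ₗ[R]
        (((Module.Dual R F) ⧸ LinearMap.range φ.dualMap) →ₗ[R]
          ((Module.Dual R F) ⧸ LinearMap.range φ.dualMap))),
      Function.Injective
        ((LinearMap.llcomp (σ₁₂ := RingHom.id R) (σ₁₃ := RingHom.id R) (σ₂₃ := RingHom.id R) R (G ⧸ LinearMap.range φ) F G) φ) ∧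
      Function.Exact
        ((LinearMap.llcomp (σ₁₂ := RingHom.id R) (σ₁₃ := RingHom.id R) (σ₂₃ := RingHom.id R) R (G ⧸ LinearMap.range φ) F G) φ)
        ((LinearMap.llcomp (σ₁₂ := RingHom.id R) (σ₁₃ := RingHom.id R) (σ₂₃ := RingHom.id R) R (G ⧸ LinearMap.range φ) G (G ⧸ LinearMap.range φ))
          (LinearMap.range φ).mkQ) ∧
      Function.Exact
        ((LinearMap.llcomp (σ₁₂ := RingHom.id R) (σ₁₃ := RingHom.id R) (σ₂₃ := RingHom.id R) R (G ⧸ LinearMap.range φ) G (G ⧸ LinearMap.range φ))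
          (LinearMap.range φ).mkQ) g ∧
      Function.Surjective g := by
  classical
  -- surjectivity of piL, with explicit preimages
  have hlift : ∀ f : (G ⧸ LinearMap.range φ) →ₗ[R] (G ⧸ LinearMap.range φ),
      ∃ n, piL φ n = f := by
    intro f
    obtain ⟨n0, hn0⟩ := Module.projective_lifting_property (LinearMap.range φ).mkQ
      (f ∘ₗ (LinearMap.range φ).mkQ) (Submodule.mkQ_surjective _)
    have hmem : n0 ∈ (LinearMap.range φ).compatibleMaps (LinearMap.range φ) := by
      intro x hx
      refine Submodule.mem_comap.mpr ?_
      rw [← Submodule.ker_mkQ (LinearMap.range φ), LinearMap.mem_ker]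
      have h1 := LinearMap.congr_fun hn0 x
      simp only [comp_apply] at h1
      have hx0 : (LinearMap.range φ).mkQ x = 0 := by
        simpa [Submodule.Quotient.mk_eq_zero] using hx
      rw [h1, hx0, map_zero]
    refine ⟨⟨n0, hmem⟩, ?_⟩
    apply LinearMap.ext
    intro b
    obtain ⟨x, rfl⟩ := Submodule.mkQ_surjective _ b
    rw [piL_apply]
    simpa using LinearMap.congr_fun hn0 x
  have hsurj : Function.Surjective (piL (R := R) φ) := fun f => hlift f
  -- kernel inclusion
  have hker : LinearMap.ker (piL (R := R) φ) ≤ LinearMap.ker (PsiL φ hφ) := by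
    intro n hn
    rw [LinearMap.mem_ker] at hn ⊢
    have hnx : ∀ x : G, (n : G →ₗ[R] G) x ∈ LinearMap.range φ := by
      intro x
      have := LinearMap.congr_fun hn ((LinearMap.range φ).mkQ x)
      rw [piL_apply] at this
      simpa [Submodule.Quotient.mk_eq_zero] using this
    set k : G →ₗ[R] F := (LinearEquiv.ofInjective φ hφ).symm.toLinearMap ∘ₗ
      LinearMap.codRestrict (LinearMap.range φ) (n : G →ₗ[R] G) hnx with hk
    have hφk : ∀ y : G, φ (k y) = (n : G →ₗ[R] G) y := by
      intro y
      simp only [hk, comp_apply, LinearEquiv.coe_coe, phi_symm φ hφ, codRestrict_apply]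
    have htheta : theta φ hφ n = k ∘ₗ φ := by
      ext x
      apply hφ
      rw [phi_theta, comp_apply, hφk]
    apply LinearMap.ext
    intro m
    obtain ⟨α, rfl⟩ := Submodule.mkQ_surjective _ m
    rw [PsiL_apply, htheta]
    have : (k ∘ₗ φ).dualMap α ∈ LinearMap.range φ.dualMap := by
      refine ⟨k.dualMap α, ?_⟩
      rw [← LinearMap.dualMap_comp_dualMap]
      rfl
    simpa [Submodule.Quotient.mk_eq_zero] using this
  -- construct g
  set e := (piL (R := R) φ).quotKerEquivOfSurjective hsurj with he
  have he_mk : ∀ n, e (Submodule.Quotient.mk n) = piL φ n := by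
    intro n
    simp [he, LinearMap.quotKerEquivOfSurjective, LinearEquiv.ofTop_apply,
      LinearMap.quotKerEquivRange_apply_mk]
  set gmap := (LinearMap.ker (piL (R := R) φ)).liftQ (PsiL φ hφ) hker ∘ₗ
    e.symm.toLinearMap with hgmap
  have hg : ∀ n, gmap (piL φ n) = PsiL φ hφ n := by
    intro n
    have hsy : e.symm (piL φ n) = Submodule.Quotient.mk n := by
      rw [LinearEquiv.symm_apply_eq, he_mk]
    rw [hgmap, comp_apply, LinearEquiv.coe_coe, hsy]
    exact Submodule.liftQ_apply _ _ _
  refine ⟨gmap, ?_, ?_, ?_, ?_⟩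
  · -- injectivity of composition with φ
    intro a b hab
    apply LinearMap.ext
    intro x
    exact hφ (LinearMap.congr_fun hab x)
  · -- exactness at Hom(B, G)
    rw [LinearMap.exact_iff]
    ext f
    simp only [LinearMap.mem_ker, LinearMap.mem_range]
    constructor
    · intro hf
      have hfx : ∀ b, f b ∈ LinearMap.range φ := by
        intro b
        have := LinearMap.congr_fun hf b
        simpa [Submodule.Quotient.mk_eq_zero] using this
      refine ⟨(LinearEquiv.ofInjective φ hφ).symm.toLinearMap ∘ₗ
        LinearMap.codRestrict (LinearMap.range φ) f hfx, ?_⟩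
      ext b
      simp [phi_symm φ hφ]
    · rintro ⟨f', rfl⟩
      ext b
      simp [Submodule.Quotient.mk_eq_zero]
  · -- exactness at Hom(B, B)
    rw [LinearMap.exact_iff]
    ext f
    simp only [LinearMap.mem_ker, LinearMap.mem_range]
    constructor
    · intro hf
      obtain ⟨n, rfl⟩ := hlift f
      rw [hg] at hf
      -- the dual of theta n lands in range φ.dualMap
      have hmem : ∀ α : Module.Dual R F,
          (theta φ hφ n).dualMap α ∈ LinearMap.range φ.dualMap := by
        intro α
        have := LinearMap.congr_fun hf ((LinearMap.range φ.dualMap).mkQ α)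
        rw [PsiL_apply] at this
        simpa [Submodule.Quotient.mk_eq_zero] using this
      -- lift through φ.dualMap
      obtain ⟨K, hK⟩ := Module.projective_lifting_property φ.dualMap.rangeRestrict
        (LinearMap.codRestrict (LinearMap.range φ.dualMap) (theta φ hφ n).dualMap hmem)
        φ.dualMap.surjective_rangeRestrict
      have hK' : φ.dualMap ∘ₗ K = (theta φ hφ n).dualMap := by
        apply LinearMap.ext
        intro α
        exact congrArg Subtype.val (LinearMap.congr_fun hK α)
      obtain ⟨k, rfl⟩ := exists_dualMap_eq' (Y := G) K
      have hkd : (k ∘ₗ φ).dualMap = (theta φ hφ n).dualMap := by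
        rw [← LinearMap.dualMap_comp_dualMap, hK']
      have htheta : theta φ hφ n = k ∘ₗ φ :=
        ((Module.dualMap_dualMap_eq_iff R F).mp (congrArg LinearMap.dualMap hkd)).symm
      -- build the lift B → G
      have hcond : LinearMap.range φ ≤
          LinearMap.ker ((n : G →ₗ[R] G) - φ ∘ₗ k) := by
        rintro _ ⟨x, rfl⟩
        rw [LinearMap.mem_ker, LinearMap.sub_apply, comp_apply]
        rw [← phi_theta φ hφ n x, htheta, comp_apply, sub_self]
      refine ⟨(LinearMap.range φ).liftQ ((n : G →ₗ[R] G) - φ ∘ₗ k) hcond, ?_⟩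
      apply LinearMap.ext
      intro b
      obtain ⟨x, rfl⟩ := Submodule.mkQ_surjective _ b
      rw [piL_apply]
      simp only [llcomp_apply, comp_apply, Submodule.mkQ_apply, Submodule.liftQ_apply]
      simp [Submodule.Quotient.mk_eq_zero, sub_eq_self]
    · rintro ⟨ℓ, rfl⟩
      have hmem : ℓ ∘ₗ (LinearMap.range φ).mkQ ∈
          (LinearMap.range φ).compatibleMaps (LinearMap.range φ) := by
        intro x hx
        refine Submodule.mem_comap.mpr ?_
        have hx0 : (LinearMap.range φ).mkQ x = 0 := by
          simpa [Submodule.Quotient.mk_eq_zero] using hx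
        simp [comp_apply, hx0]
      have hpi : piL φ ⟨ℓ ∘ₗ (LinearMap.range φ).mkQ, hmem⟩ =
          (LinearMap.llcomp (σ₁₂ := RingHom.id R) (σ₁₃ := RingHom.id R) (σ₂₃ := RingHom.id R) R (G ⧸ LinearMap.range φ) G (G ⧸ LinearMap.range φ))
            (LinearMap.range φ).mkQ ℓ := by
        apply LinearMap.ext
        intro b
        obtain ⟨x, rfl⟩ := Submodule.mkQ_surjective _ b
        rw [piL_apply]
        rfl
      rw [← hpi, hg]
      have htheta : theta φ hφ ⟨ℓ ∘ₗ (LinearMap.range φ).mkQ, hmem⟩ = 0 := by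
        ext x
        apply hφ
        rw [phi_theta]
        have hz : Submodule.Quotient.mk (p := LinearMap.range φ) (φ x) = 0 :=
          (Submodule.Quotient.mk_eq_zero _).mpr (LinearMap.mem_range_self φ x)
        show ℓ (Submodule.Quotient.mk (φ x)) = φ ((0 : F →ₗ[R] F) x)
        rw [hz]
        simp
      apply LinearMap.ext
      intro m
      obtain ⟨α, rfl⟩ := Submodule.mkQ_surjective _ m
      rw [PsiL_apply, htheta]
      have h0' : (0 : F →ₗ[R] F).dualMap α = 0 := by ext x; simp
      simp [h0']
  · -- surjectivity of g
    intro u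
    obtain ⟨v, hv⟩ := Module.projective_lifting_property (LinearMap.range φ.dualMap).mkQ
      (u ∘ₗ (LinearMap.range φ.dualMap).mkQ) (Submodule.mkQ_surjective _)
    have hvmem : ∀ β : Module.Dual R G,
        (v ∘ₗ φ.dualMap) β ∈ LinearMap.range φ.dualMap := by
      intro β
      rw [← Submodule.ker_mkQ (LinearMap.range φ.dualMap), LinearMap.mem_ker]
      have h1 := LinearMap.congr_fun hv (φ.dualMap β)
      simp only [comp_apply] at h1 ⊢
      rw [h1]
      have : (LinearMap.range φ.dualMap).mkQ (φ.dualMap β) = 0 := by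
        simp [Submodule.Quotient.mk_eq_zero]
      rw [this, map_zero]
    obtain ⟨W, hW⟩ := Module.projective_lifting_property φ.dualMap.rangeRestrict
      (LinearMap.codRestrict (LinearMap.range φ.dualMap) (v ∘ₗ φ.dualMap) hvmem)
      φ.dualMap.surjective_rangeRestrict
    have hW' : φ.dualMap ∘ₗ W = v ∘ₗ φ.dualMap := by
      apply LinearMap.ext
      intro β
      exact congrArg Subtype.val (LinearMap.congr_fun hW β)
    obtain ⟨n1, hn1⟩ := exists_dualMap_eq' (Y := G) W
    obtain ⟨h0, hh0⟩ := exists_dualMap_eq' (Y := F) v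
    have hcomm : n1 ∘ₗ φ = φ ∘ₗ h0 := by
      apply (Module.dualMap_dualMap_eq_iff R F).mp
      apply congrArg LinearMap.dualMap
      rw [← LinearMap.dualMap_comp_dualMap, ← LinearMap.dualMap_comp_dualMap, hn1, hh0]
      exact hW'
    clear hW hW' hn1
    have hmem : n1 ∈ (LinearMap.range φ).compatibleMaps (LinearMap.range φ) := by
      rintro _ ⟨x, rfl⟩
      refine Submodule.mem_comap.mpr ⟨h0 x, ?_⟩
      exact (LinearMap.congr_fun hcomm x).symm
    refine ⟨piL φ ⟨n1, hmem⟩, ?_⟩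
    rw [hg]
    have htheta : theta φ hφ ⟨n1, hmem⟩ = h0 := by
      ext x
      apply hφ
      rw [phi_theta]
      exact (LinearMap.congr_fun hcomm x)
    clear hvmem
    apply LinearMap.ext
    intro m
    obtain ⟨α, rfl⟩ := Submodule.mkQ_surjective (LinearMap.range φ.dualMap) m
    rw [PsiL_apply, htheta, hh0]
    have := LinearMap.congr_fun hv α
    simpa [comp_apply] using this
end

section
/- Let D be a Cohen–Macaulay graded quotient of R = k[x_0,…,x_N] of codimension 2 with minimal free resolution 0 → F → G → I_D(ℓ) → 0. Then there is an exact sequence 0 → K_D(N+1)^* → F(−ℓ) ⊗_R D → G(−ℓ) ⊗_R D → I_D/I_D² → 0, where K_D = Ext²_R(D, R)(−N−1) is the canonical module and (·)^* denotes Hom_D(·, D). -/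
open TensorProduct LinearMap

section Stmt7Aux
variable {R : Type} [CommRing R] (I : Ideal R)
variable {F G : Type} [AddCommGroup F] [Module R F] [Module.Finite R F] [Module.Free R F]
  [AddCommGroup G] [Module R G] [Module.Finite R G] [Module.Free R G]

/-- The natural equivalence `M ⊗ N ≃ Hom(M*, N)` for `M` finite free. -/
noncomputable def stmt7TensEquiv (R M N : Type) [CommRing R] [AddCommGroup M] [AddCommGroup N]
    [Module R M] [Module R N] [Module.Finite R M] [Module.Free R M] :
    M ⊗[R] N ≃ₗ[R] (Module.Dual R M →ₗ[R] N) :=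
  (TensorProduct.congr (Module.evalEquiv R M) (LinearEquiv.refl R N)) ≪≫ₗ
    dualTensorHomEquiv R (Module.Dual R M) N

lemma stmt7TensEquiv_tmul (R M N : Type) [CommRing R] [AddCommGroup M] [AddCommGroup N]
    [Module R M] [Module R N] [Module.Finite R M] [Module.Free R M]
    (x : M) (n : N) (f : Module.Dual R M) :
    stmt7TensEquiv R M N (x ⊗ₜ n) f = f x • n := by
  simp [stmt7TensEquiv, Module.evalEquiv]

lemma stmt7TensEquiv_comm (N : Type) [AddCommGroup N] [Module R N]
    (α : F →ₗ[R] G) (t : F ⊗[R] N) :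
    stmt7TensEquiv R G N (α.rTensor N t) = (stmt7TensEquiv R F N t).comp α.dualMap := by
  induction t with
  | zero => simp
  | add a b ha hb => simp [map_add, ha, hb, LinearMap.add_comp]
  | tmul x n =>
      ext g
      simp [stmt7TensEquiv_tmul, dualMap_apply]

theorem stmt7_aux (α : F →ₗ[R] G) (β : G →ₗ[R] I)
    (hβ : Function.Surjective β) (hexact : Function.Exact α β) :
    ∃ (g₀ : ((Module.Dual R F ⧸ LinearMap.range α.dualMap) →ₗ[R] (R ⧸ I)) →ₗ[R]
        (F ⊗[R] (R ⧸ I)))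
      (g₃ : (G ⊗[R] (R ⧸ I)) →ₗ[R] I.Cotangent),
      Function.Injective g₀ ∧
      Function.Exact g₀ (α.rTensor (R ⧸ I)) ∧
      Function.Exact (α.rTensor (R ⧸ I)) g₃ ∧
      Function.Surjective g₃ := by
  set D := R ⧸ I
  -- the equivalence I ⊗ D ≃ I.Cotangent
  let e : (↥I ⊗[R] D) ≃ₗ[R] I.Cotangent := tensorQuotEquivQuotSMul (↥I) I
  refine ⟨(stmt7TensEquiv R F D).symm.toLinearMap ∘ₗ
      LinearMap.lcomp R D (LinearMap.range α.dualMap).mkQ,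
    e.toLinearMap ∘ₗ β.rTensor D, ?_, ?_, ?_, ?_⟩
  · intro φ ψ h
    have h' := (stmt7TensEquiv R F D).symm.injective h
    refine LinearMap.ext fun x => ?_
    obtain ⟨y, rfl⟩ := Submodule.mkQ_surjective _ x
    exact DFunLike.congr_fun h' y
  · intro t
    constructor
    · intro ht
      have h2 : (stmt7TensEquiv R F D t).comp α.dualMap = 0 := by
        rw [← stmt7TensEquiv_comm, ht, map_zero]
      have hle : LinearMap.range α.dualMap ≤ LinearMap.ker (stmt7TensEquiv R F D t) := by
        rintro _ ⟨g, rfl⟩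
        exact DFunLike.congr_fun h2 g
      refine ⟨(LinearMap.range α.dualMap).liftQ (stmt7TensEquiv R F D t) hle, ?_⟩
      simp only [LinearMap.comp_apply, LinearEquiv.coe_coe, lcomp_apply']
      rw [Submodule.liftQ_mkQ]
      exact (stmt7TensEquiv R F D).symm_apply_apply t
    · rintro ⟨φ, rfl⟩
      have : α.rTensor D
          ((stmt7TensEquiv R F D).symm (φ.comp (LinearMap.range α.dualMap).mkQ)) = 0 := by
        apply (stmt7TensEquiv R G D).injective
        rw [stmt7TensEquiv_comm, map_zero, LinearEquiv.apply_symm_apply]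
        refine LinearMap.ext fun g => ?_
        simp only [LinearMap.comp_apply, LinearMap.zero_apply]
        have : (LinearMap.range α.dualMap).mkQ (α.dualMap g) = 0 := by
          rw [Submodule.mkQ_apply, Submodule.Quotient.mk_eq_zero]
          exact ⟨g, rfl⟩
        rw [this, map_zero]
      simpa [lcomp_apply'] using this
  · exact (rTensor_exact D hexact hβ).comp_injective _ e.injective e.map_zero
  · exact e.surjective.comp (LinearMap.rTensor_surjective D hβ)

end Stmt7Aux

/-- Let `D = R/I_D` be a Cohen–Macaulay codimension 2 graded quotient of
`R = k[x_0,…,x_N]` with Hilbert–Burch resolution `0 → F → G → I_D(ℓ) → 0`.  Then there is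
an exact sequence `0 → K_D(N+1)^* → F(−ℓ) ⊗ D → G(−ℓ) ⊗ D → I_D/I_D² → 0` (twists
suppressed), where `K_D(N+1) ≅ Ext¹_R(I_D, R)` is realized as `coker(G^* → F^*)` and
`(·)^* = Hom_D(·, D)`. -/
theorem stmt7 (k : Type) [Field k] (N : ℕ) (hN : 2 ≤ N)
    (I : Ideal (MvPolynomial (Fin (N + 1)) k))
    (F G : Type) [AddCommGroup F] [Module (MvPolynomial (Fin (N + 1)) k) F]
    [Module.Finite (MvPolynomial (Fin (N + 1)) k) F]
    [Module.Free (MvPolynomial (Fin (N + 1)) k) F]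
    [AddCommGroup G] [Module (MvPolynomial (Fin (N + 1)) k) G]
    [Module.Finite (MvPolynomial (Fin (N + 1)) k) G]
    [Module.Free (MvPolynomial (Fin (N + 1)) k) G]
    (α : F →ₗ[MvPolynomial (Fin (N + 1)) k] G)
    (β : G →ₗ[MvPolynomial (Fin (N + 1)) k] I)
    (hα : Function.Injective α) (hβ : Function.Surjective β) (hexact : Function.Exact α β)
    -- codimension 2
    (hcodim : ringKrullDim ((MvPolynomial (Fin (N + 1)) k) ⧸ I) = ((N - 1 : ℕ) : ℕ)) :
    ∃ (g₀ : (((Module.Dual (MvPolynomial (Fin (N + 1)) k) F) ⧸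
          LinearMap.range α.dualMap) →ₗ[MvPolynomial (Fin (N + 1)) k]
          ((MvPolynomial (Fin (N + 1)) k) ⧸ I)) →ₗ[MvPolynomial (Fin (N + 1)) k]
        (F ⊗[MvPolynomial (Fin (N + 1)) k] ((MvPolynomial (Fin (N + 1)) k) ⧸ I)))
      (g₃ : (G ⊗[MvPolynomial (Fin (N + 1)) k] ((MvPolynomial (Fin (N + 1)) k) ⧸ I))
          →ₗ[MvPolynomial (Fin (N + 1)) k] I.Cotangent),
      Function.Injective g₀ ∧
      Function.Exact g₀ (α.rTensor ((MvPolynomial (Fin (N + 1)) k) ⧸ I)) ∧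
      Function.Exact (α.rTensor ((MvPolynomial (Fin (N + 1)) k) ⧸ I)) g₃ ∧
      Function.Surjective g₃ := by
  exact stmt7_aux I α β hβ hexact
end
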